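/- Let K ∈ ℝ^{n×n} be a symmetric positive semidefinite matrix and λ > 0, and set A = K(K + λ·I_n)⁻¹ and Σ = Aᵀ A. Then tr(Σ²) ≤ 27·tr(K) / (256·λ); in particular tr(Σ²) ≤ tr(K)/(4λ). -/
import Mathlib


open Matrix

/-- For symmetric positive semidefinite `K` and `λ > 0`, with
`A = K(K + λI)⁻¹` and `Σ = AᵀA`, one has `tr(Σ²) ≤ 27·tr(K)/(256·λ)`, and in
particular `tr(Σ²) ≤ tr(K)/(4λ)`. -/
private lemma key_ineq {x l : ℝ} (hx : 0 ≤ x) (hl : 0 < l) :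
    (x * (x + l)⁻¹) ^ 4 ≤ 27 * x / (256 * l) := by
  have hxl : 0 < x + l := by linarith
  have h1 : (x * (x + l)⁻¹) ^ 4 = x ^ 4 / (x + l) ^ 4 := by
    rw [mul_pow, inv_pow, div_eq_mul_inv]
  rw [h1, div_le_div_iff₀ (by positivity) (by positivity)]
  nlinarith [mul_nonneg hx (mul_nonneg (sq_nonneg (x - 3*l))
    (by positivity : (0:ℝ) ≤ 27*x^2 + 14*l*x + 3*l^2)), sq_nonneg x, sq_nonneg l]

theorem trace_Sigma_sq_le {n : ℕ} (K : Matrix (Fin n) (Fin n) ℝ) (hK : K.PosSemidef)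
    (l : ℝ) (hl : 0 < l)
    (A : Matrix (Fin n) (Fin n) ℝ)
    (hA : A = K * (K + l • (1 : Matrix (Fin n) (Fin n) ℝ))⁻¹)
    (S : Matrix (Fin n) (Fin n) ℝ) (hS : S = Aᵀ * A) :
    (S * S).trace ≤ 27 * K.trace / (256 * l) ∧ (S * S).trace ≤ K.trace / (4 * l) := by
  have hH := hK.1
  set U : Matrix (Fin n) (Fin n) ℝ := (hH.eigenvectorUnitary : Matrix (Fin n) (Fin n) ℝ) with hU
  set μ : Fin n → ℝ := hH.eigenvalues with hμ
  have hμ0 : ∀ i, 0 ≤ μ i := hK.eigenvalues_nonneg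
  have h1 : (RCLike.ofReal ∘ μ : Fin n → ℝ) = μ := rfl
  have hKspec : K = U * diagonal μ * star U := by
    have := hH.spectral_theorem; rw [h1] at this; exact this
  have hUU : U * star U = 1 := Matrix.mem_unitaryGroup_iff.mp hH.eigenvectorUnitary.2
  have hUU' : star U * U = 1 := Matrix.mem_unitaryGroup_iff'.mp hH.eigenvectorUnitary.2
  have hconj_mul : ∀ f g : Fin n → ℝ,
      (U * diagonal f * star U) * (U * diagonal g * star U)
        = U * diagonal (fun i => f i * g i) * star U := by
    intro f g
    calc (U * diagonal f * star U) * (U * diagonal g * star U)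
        = U * (diagonal f * (star U * U) * diagonal g) * star U := by noncomm_ring
      _ = U * diagonal (fun i => f i * g i) * star U := by
          rw [hUU', mul_one, diagonal_mul_diagonal]
  have htrace : ∀ f : Fin n → ℝ, (U * diagonal f * star U).trace = ∑ i, f i := by
    intro f
    rw [Matrix.trace_mul_cycle, hUU', one_mul, trace_diagonal]
  have hKl : K + l • (1 : Matrix (Fin n) (Fin n) ℝ)
      = U * diagonal (fun i => μ i + l) * star U := by
    have hsm : U * diagonal (fun _ : Fin n => l) * star U
        = l • (1 : Matrix (Fin n) (Fin n) ℝ) := by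
      rw [← smul_one_eq_diagonal, Matrix.mul_smul, Matrix.smul_mul, Matrix.mul_one, hUU]
    rw [hKspec, ← hsm, ← Matrix.add_mul, ← Matrix.mul_add, diagonal_add]
  have hne : ∀ i, μ i + l ≠ 0 := fun i => by have := hμ0 i; positivity
  have hinv : (K + l • (1 : Matrix (Fin n) (Fin n) ℝ))⁻¹
      = U * diagonal (fun i => (μ i + l)⁻¹) * star U := by
    apply Matrix.inv_eq_right_inv
    rw [hKl, hconj_mul]
    have h2 : (fun i => (μ i + l) * (μ i + l)⁻¹) = fun _ : Fin n => (1:ℝ) := by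
      funext i; exact mul_inv_cancel₀ (hne i)
    rw [h2, diagonal_one, mul_one, hUU]
  set f : Fin n → ℝ := fun i => μ i * (μ i + l)⁻¹ with hf
  have hAspec : A = U * diagonal f * star U := by
    rw [hA, hinv, hKspec, hconj_mul]
  have hAT : Aᵀ = A := by
    rw [hAspec]
    have hst : star U = Uᵀ := by
      rw [← conjTranspose_eq_transpose_of_trivial]; rfl
    rw [hst, Matrix.transpose_mul, Matrix.transpose_mul, transpose_transpose,
      diagonal_transpose, mul_assoc]
  have hSsq : S = U * diagonal (fun i => f i * f i) * star U := by
    rw [hS, hAT, hAspec, hconj_mul]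
  have hSspec : S * S = U * diagonal (fun i => (f i)^4) * star U := by
    rw [hSsq, hconj_mul]
    have h3 : (fun i => (f i * f i) * (f i * f i)) = fun i => (f i)^4 := by
      funext i; ring
    rw [h3]
  have htrS : (S * S).trace = ∑ i, (f i)^4 := by rw [hSspec, htrace]
  have htrK : K.trace = ∑ i, μ i := by rw [hKspec, htrace]
  have hKtr0 : 0 ≤ K.trace := by
    rw [htrK]; exact Finset.sum_nonneg fun i _ => hμ0 i
  have hmain : (S * S).trace ≤ 27 * K.trace / (256 * l) := by
    rw [htrS, htrK, Finset.mul_sum, Finset.sum_div]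
    exact Finset.sum_le_sum fun i _ => key_ineq (hμ0 i) hl
  refine ⟨hmain, hmain.trans ?_⟩
  rw [div_le_div_iff₀ (by positivity) (by positivity)]
  nlinarith [mul_nonneg hKtr0 hl.le]
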